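/- Let f ∈ ℝ[x,y,z] be a smooth ternary quartic. Then at most four bitangents of f can intersect in a common point: there do not exist five pairwise non-proportional bitangents l₁,…,l₅ of f and a nonzero point P ∈ ℂ³ with l₁(P) = l₂(P) = l₃(P) = l₄(P) = l₅(P) = 0. -/

import Mathlib

open MvPolynomial

noncomputable section AuxBitangent

namespace AuxBitangent

abbrev R3 : Type := MvPolynomial (Fin 3) ℂ

lemma degree_eq (m : Fin 3 →₀ ℕ) : m.degree = m 0 + m 1 + m 2 := by
  have h1 : m.degree = ∑ i ∈ m.support, m i := rfl
  have h2 : (∑ i ∈ m.support, m i) = ∑ i : Fin 3, m i :=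
    Finset.sum_subset (Finset.subset_univ _)
      (fun i _ h => Finsupp.notMem_support_iff.mp h)
  rw [h1, h2, Fin.sum_univ_three]

lemma eq_single_of_degree_one (m : Fin 3 →₀ ℕ) (hm : m.degree = 1) :
    ∃ i, m = Finsupp.single i 1 := by
  rw [degree_eq] at hm
  by_cases h0 : m 0 = 1
  · exact ⟨0, Finsupp.ext fun k => by fin_cases k <;> simp [Finsupp.single_apply] <;> omega⟩
  by_cases h1 : m 1 = 1
  · exact ⟨1, Finsupp.ext fun k => by fin_cases k <;> simp [Finsupp.single_apply] <;> omega⟩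
  exact ⟨2, Finsupp.ext fun k => by fin_cases k <;> simp [Finsupp.single_apply] <;> omega⟩

lemma linear_as_sum (l : R3) (hl : l.IsHomogeneous 1) :
    l = ∑ i, C (coeff (Finsupp.single i 1) l) * X i := by
  apply MvPolynomial.ext
  intro m
  rw [MvPolynomial.coeff_sum]
  simp only [C_mul_X_eq_monomial, coeff_monomial]
  by_cases hm : m.degree = 1
  · obtain ⟨i0, rfl⟩ := eq_single_of_degree_one m hm
    rw [Finset.sum_eq_single i0]
    · simp
    · intro b _ hb
      rw [if_neg]
      intro h
      rcases (Finsupp.single_eq_single_iff _ _ _ _).mp h with ⟨h1, _⟩ | ⟨h1, _⟩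
      · exact hb h1
      · exact one_ne_zero h1
    · simp
  · rw [hl.coeff_eq_zero hm, Finset.sum_eq_zero]
    intro i _
    rw [if_neg]
    intro h
    apply hm
    rw [← h]
    rw [degree_eq]
    fin_cases i <;> simp

lemma ringHom_comp_aeval {S T : Type} [CommSemiring S] [CommSemiring T] [Algebra ℂ S]
    [Algebra ℂ T] (φ : S →+* T) (hφ : ∀ c : ℂ, φ (algebraMap ℂ S c) = algebraMap ℂ T c)
    (g : Fin 3 → S) (p : R3) :
    φ (aeval g p) = aeval (fun i => φ (g i)) p := by
  induction p using MvPolynomial.induction_on with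
  | C a => simp [hφ]
  | add p q hp hq => simp [map_add, hp, hq]
  | mul_X p i hp => simp [map_mul, hp]

lemma aeval_eq_eval' (v : Fin 3 → ℂ) (p : R3) : aeval v p = eval v p := by
  induction p using MvPolynomial.induction_on with
  | C a => simp
  | add p q hp hq => simp [hp, hq]
  | mul_X p i hp => simp [hp]

lemma eval_linear (l : R3) (hl : l.IsHomogeneous 1) (x y : Fin 3 → ℂ) (t : ℂ) :
    eval (fun i => x i + t * y i) l = eval x l + t * eval y l := by
  have h := linear_as_sum l hl
  rw [h]
  simp only [map_sum, eval_mul, eval_C, eval_X, Finset.mul_sum]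
  rw [← Finset.sum_add_distrib]
  apply Finset.sum_congr rfl
  intro i _
  ring
lemma X_dvd_sub_aeval (j : Fin 3) (p : R3) :
    X j ∣ p - aeval (fun i => if i = j then 0 else X i) p := by
  induction p using MvPolynomial.induction_on' with
  | monomial m c =>
    by_cases hmj : m j = 0
    · have : (aeval (fun i => if i = j then 0 else X i) (monomial m c) : R3)
          = monomial m c := by
        rw [aeval_monomial, Finsupp.prod_fintype _ _ (fun i => pow_zero _)]
        have hprod : (∏ i : Fin 3, (if i = j then (0:R3) else X i) ^ m i)
            = ∏ i : Fin 3, (X i) ^ m i := by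
          apply Finset.prod_congr rfl
          intro i _
          by_cases hij : i = j
          · subst hij; rw [hmj]; simp
          · rw [if_neg hij]
        rw [hprod]
        rw [monomial_eq, Finsupp.prod_fintype _ _ (fun i => pow_zero _)]
        simp [algebraMap_eq]
      rw [this, sub_self]
      exact dvd_zero _
    · have : (aeval (fun i => if i = j then 0 else X i) (monomial m c) : R3) = 0 := by
        rw [aeval_monomial, Finsupp.prod_fintype _ _ (fun i => pow_zero _)]
        have : (∏ i : Fin 3, (if i = j then (0:R3) else X i) ^ m i) = 0 := by
          apply Finset.prod_eq_zero (Finset.mem_univ j)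
          simp [zero_pow hmj]
        rw [this, mul_zero]
      rw [this, sub_zero]
      rw [X_dvd_monomial]
      exact Or.inr hmj
  | add p q hp hq =>
    have : p + q - aeval (fun i => if i = j then 0 else X i) (p + q)
        = (p - aeval (fun i => if i = j then 0 else X i) p)
          + (q - aeval (fun i => if i = j then 0 else X i) q) := by
      rw [map_add]; ring
    rw [this]
    exact dvd_add hp hq

lemma X_dvd_of_eval_zero (j : Fin 3) (p : R3)
    (h : ∀ w : Fin 3 → ℂ, w j = 0 → eval w p = 0) : X j ∣ p := by
  have hπ : (aeval (fun i => if i = j then 0 else X i) p : R3) = 0 := by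
    apply MvPolynomial.funext
    intro w
    rw [map_zero]
    have hc := ringHom_comp_aeval (MvPolynomial.eval w) (fun c => by simp)
      (fun i => if i = j then 0 else X i) p
    rw [hc]
    have : (aeval (fun i => MvPolynomial.eval w (if i = j then (0:R3) else X i)) p)
        = eval (fun i => if i = j then 0 else w i) p := by
      rw [aeval_eq_eval']
      apply congrArg (fun g => eval g p)
      funext i
      by_cases hij : i = j <;> simp [hij]
    rw [this]
    exact h _ (by simp)
  have := X_dvd_sub_aeval j p
  rwa [hπ, sub_zero] at this
lemma linear_struct (l : R3) (hl : l.IsHomogeneous 1) (hl0 : l ≠ 0) :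
    ∃ (σ τ : R3 →ₐ[ℂ] R3) (j : Fin 3),
      (∀ p, τ (σ p) = p) ∧ (∀ p, σ (τ p) = p) ∧ τ (X j) = l := by
  classical
  set c : Fin 3 → ℂ := fun i => coeff (Finsupp.single i 1) l with hc
  have hsum : l = ∑ i, C (c i) * X i := linear_as_sum l hl
  have hex : ∃ j, c j ≠ 0 := by
    by_contra hno
    push_neg at hno
    apply hl0
    rw [hsum]
    simp [hno]
  obtain ⟨j, hj⟩ := hex
  set r : R3 := ∑ i ∈ Finset.univ.erase j, C (c i) * X i with hr
  have hlr : l = C (c j) * X j + r := by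
    rw [hsum, hr, ← Finset.add_sum_erase _ _ (Finset.mem_univ j)]
  set σ : R3 →ₐ[ℂ] R3 :=
    aeval (fun i => if i = j then C (c j)⁻¹ * (X j - r) else X i) with hσ
  set τ : R3 →ₐ[ℂ] R3 := aeval (fun i => if i = j then l else X i) with hτ
  have hτr : τ r = r := by
    rw [hr, map_sum]
    apply Finset.sum_congr rfl
    intro i hi
    have hij : i ≠ j := (Finset.mem_erase.mp hi).1
    rw [map_mul]
    simp [hτ, hij]
  have hσr : σ r = r := by
    rw [hr, map_sum]
    apply Finset.sum_congr rfl
    intro i hi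
    have hij : i ≠ j := (Finset.mem_erase.mp hi).1
    rw [map_mul]
    simp [hσ, hij]
  have hcj : (C (c j) : R3) * C (c j)⁻¹ = 1 := by
    rw [← C_mul, mul_inv_cancel₀ hj, C_1]
  have hτσ : ∀ p, τ (σ p) = p := by
    have : τ.comp σ = AlgHom.id ℂ R3 := by
      apply MvPolynomial.algHom_ext
      intro i
      by_cases hij : i = j
      · rw [hij]
        simp only [AlgHom.comp_apply, AlgHom.id_apply]
        rw [hσ]
        simp only [aeval_X, eq_self_iff_true, if_true]
        rw [map_mul, map_sub, hτr]
        have h1 : τ (C (c j)⁻¹) = C (c j)⁻¹ := by simp [hτ]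
        have h2 : τ (X j) = l := by simp [hτ]
        rw [h1, h2, hlr]
        ring_nf
        rw [mul_comm (C (c j)) (C (c j)⁻¹)] at hcj
        calc C (c j)⁻¹ * C (c j) * X j = (C (c j)⁻¹ * C (c j)) * X j := by ring
          _ = X j := by rw [hcj, one_mul]
      · simp [AlgHom.comp_apply, hσ, hτ, hij]
    intro p
    have := congrArg (fun φ => φ p) this
    simpa using this
  have hστ : ∀ p, σ (τ p) = p := by
    have : σ.comp τ = AlgHom.id ℂ R3 := by
      apply MvPolynomial.algHom_ext
      intro i
      by_cases hij : i = j
      · rw [hij]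
        simp only [AlgHom.comp_apply, AlgHom.id_apply]
        rw [hτ]
        simp only [aeval_X, eq_self_iff_true, if_true]
        rw [hlr, map_add, map_mul, hσr]
        have h1 : σ (C (c j)) = C (c j) := by simp [hσ]
        have h2 : σ (X j) = C (c j)⁻¹ * (X j - r) := by simp [hσ]
        rw [h1, h2]
        calc C (c j) * (C (c j)⁻¹ * (X j - r)) + r
            = (C (c j) * C (c j)⁻¹) * (X j - r) + r := by ring
          _ = X j := by rw [hcj]; ring
      · simp [AlgHom.comp_apply, hσ, hτ, hij]
    intro p
    have := congrArg (fun φ => φ p) this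
    simpa using this
  exact ⟨σ, τ, j, hτσ, hστ, by simp [hτ]⟩

lemma linear_dvd_of_vanishing (l p : R3) (hl : l.IsHomogeneous 1) (hl0 : l ≠ 0)
    (h : ∀ v : Fin 3 → ℂ, eval v l = 0 → eval v p = 0) : l ∣ p := by
  obtain ⟨σ, τ, j, hτσ, hστ, hτX⟩ := linear_struct l hl hl0
  have hσl : σ l = X j := by rw [← hτX, hστ]
  have hσev : ∀ (q : R3) (w : Fin 3 → ℂ),
      eval w (σ q) = eval (fun i => eval w (σ (X i))) q := by
    intro q w
    have hσa : σ = aeval (σ ∘ X) := MvPolynomial.aeval_unique σ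
    conv_lhs => rw [hσa]
    rw [ringHom_comp_aeval (MvPolynomial.eval w) (fun c => by simp) _ q]
    rw [aeval_eq_eval']
    rfl
  have hXdvd : X j ∣ σ p := by
    apply X_dvd_of_eval_zero
    intro w hw
    rw [hσev p w]
    apply h
    rw [← hσev l w, hσl]
    simpa using hw
  obtain ⟨g, hg⟩ := hXdvd
  refine ⟨τ g, ?_⟩
  calc p = τ (σ p) := (hτσ p).symm
    _ = τ (X j * g) := by rw [hg]
    _ = l * τ g := by rw [map_mul, hτX]

lemma prime_X_fin3 (j : Fin 3) : Prime (X j : R3) := by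
  have h0 : Prime (X (0 : Fin 3) : R3) := by
    have hp : Prime ((MvPolynomial.finSuccEquiv ℂ 2) (X 0)) := by
      rw [MvPolynomial.finSuccEquiv_X_zero]
      exact Polynomial.prime_X
    exact (MulEquiv.prime_iff (MvPolynomial.finSuccEquiv ℂ 2).toMulEquiv).mp hp
  have hswap : (rename (Equiv.swap (0 : Fin 3) j) (X (0:Fin 3)) : R3) = X j := by
    simp [rename_X, Equiv.swap_apply_left]
  rw [← hswap]
  exact (MulEquiv.prime_iff (MvPolynomial.renameEquiv ℂ (Equiv.swap (0:Fin 3) j)).toMulEquiv).mpr h0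

lemma linear_prime (l : R3) (hl : l.IsHomogeneous 1) (hl0 : l ≠ 0) : Prime l := by
  obtain ⟨σ, τ, j, hτσ, hστ, hτX⟩ := linear_struct l hl hl0
  let e : R3 ≃ₐ[ℂ] R3 := AlgEquiv.ofAlgHom τ σ (AlgHom.ext hτσ) (AlgHom.ext hστ)
  have : l = e (X j) := by simp [e, AlgEquiv.ofAlgHom, hτX]; exact hτX.symm
  rw [this]
  exact (MulEquiv.prime_iff e.toMulEquiv).mpr (prime_X_fin3 j)
lemma aeval_X_mul_C {S : Type} [CommRing S] [Algebra ℂ S] (g : Fin 3 → S) (p : R3) (n : ℕ)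
    (hp : p.IsHomogeneous n) :
    (aeval (fun i => (Polynomial.X : Polynomial S) * Polynomial.C (g i)) p : Polynomial S)
      = Polynomial.X ^ n * Polynomial.C (aeval g p) := by
  conv_lhs => rw [p.as_sum]
  have hrhs : (Polynomial.X ^ n * Polynomial.C (aeval g p) : Polynomial S)
      = ∑ m ∈ p.support, Polynomial.X ^ n * Polynomial.C (aeval g (monomial m (coeff m p))) := by
    rw [← Finset.mul_sum, ← map_sum, ← map_sum, ← p.as_sum]
  rw [map_sum, hrhs]
  apply Finset.sum_congr rfl
  intro m hm
  have hdeg : m.degree = n := by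
    have := hp (mem_support_iff.mp hm)
    simpa [Finsupp.degree_eq_weight_one, Pi.one_def] using this
  rw [aeval_monomial, aeval_monomial,
    Finsupp.prod_fintype _ _ (fun i => pow_zero _),
    Finsupp.prod_fintype _ _ (fun i => pow_zero _),
    Fin.prod_univ_three, Fin.prod_univ_three]
  have halg : (algebraMap ℂ (Polynomial S)) (coeff m p)
      = Polynomial.C ((algebraMap ℂ S) (coeff m p)) := Polynomial.algebraMap_apply _
  rw [halg]
  rw [← hdeg, degree_eq]
  simp only [mul_pow, map_mul, map_pow, pow_add]
  ring

lemma theta_eval_one (p : R3) :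
    Polynomial.eval (1 : R3)
      (aeval (fun i => (Polynomial.X : Polynomial R3) * Polynomial.C (X i)) p) = p := by
  have h := ringHom_comp_aeval (Polynomial.evalRingHom (1 : R3))
    (fun c => by simp [Polynomial.algebraMap_apply, algebraMap_eq])
    (fun i => (Polynomial.X : Polynomial R3) * Polynomial.C (X i)) p
  simp only [Polynomial.coe_evalRingHom, Polynomial.eval_mul, Polynomial.eval_X,
    Polynomial.eval_C, one_mul] at h
  rw [h]
  exact aeval_X_left_apply p

lemma prime_cancel {p q x : R3} (hp : Prime p) (hq : Prime q) (hna : ¬ Associated q p)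
    (h : q ∣ p * x) : q ∣ x :=
  (hq.dvd_or_dvd h).resolve_left
    (fun hd => hna (hq.irreducible.associated_of_dvd hp.irreducible hd))

lemma eq_zero_of_vanish_five (L : Fin 5 → R3) (hLh : ∀ i, (L i).IsHomogeneous 1)
    (hL0 : ∀ i, L i ≠ 0)
    (hna : ∀ i j, i ≠ j → ¬ Associated (L i) (L j))
    (G : R3) (n : ℕ) (hGh : G.IsHomogeneous n) (hn : n < 5)
    (hdvd : ∀ i, L i ∣ G) : G = 0 := by
  by_contra hG0
  have hpr : ∀ i, Prime (L i) := fun i => linear_prime (L i) (hLh i) (hL0 i)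
  obtain ⟨g1, hg1⟩ := hdvd 0
  have h2 : L 1 ∣ g1 := prime_cancel (hpr 0) (hpr 1) (hna 1 0 (by decide)) (hg1 ▸ hdvd 1)
  obtain ⟨g2, hg2⟩ := h2
  have h3 : L 2 ∣ g2 := by
    have := hdvd 2
    rw [hg1, hg2] at this
    exact prime_cancel (hpr 1) (hpr 2) (hna 2 1 (by decide))
      (prime_cancel (hpr 0) (hpr 2) (hna 2 0 (by decide)) this)
  obtain ⟨g3, hg3⟩ := h3
  have h4 : L 3 ∣ g3 := by
    have := hdvd 3
    rw [hg1, hg2, hg3] at this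
    exact prime_cancel (hpr 2) (hpr 3) (hna 3 2 (by decide))
      (prime_cancel (hpr 1) (hpr 3) (hna 3 1 (by decide))
        (prime_cancel (hpr 0) (hpr 3) (hna 3 0 (by decide)) this))
  obtain ⟨g4, hg4⟩ := h4
  have h5 : L 4 ∣ g4 := by
    have := hdvd 4
    rw [hg1, hg2, hg3, hg4] at this
    exact prime_cancel (hpr 3) (hpr 4) (hna 4 3 (by decide))
      (prime_cancel (hpr 2) (hpr 4) (hna 4 2 (by decide))
        (prime_cancel (hpr 1) (hpr 4) (hna 4 1 (by decide))
          (prime_cancel (hpr 0) (hpr 4) (hna 4 0 (by decide)) this)))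
  obtain ⟨g5, hg5⟩ := h5
  set LL : R3 := L 0 * (L 1 * (L 2 * (L 3 * L 4))) with hLL
  have hGLL : G = LL * g5 := by rw [hLL, hg1, hg2, hg3, hg4, hg5]; ring
  have hLLh : LL.IsHomogeneous 5 := by
    have := ((hLh 0).mul ((hLh 1).mul ((hLh 2).mul ((hLh 3).mul (hLh 4)))))
    exact this
  have hLL0 : LL ≠ 0 := by
    simp only [hLL, mul_ne_zero_iff]
    exact ⟨hL0 0, hL0 1, hL0 2, hL0 3, hL0 4⟩
  have hg50 : g5 ≠ 0 := fun h => hG0 (by rw [hGLL, h, mul_zero])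
  -- apply Theta
  set Θg : Fin 3 → Polynomial R3 := fun i => Polynomial.X * Polynomial.C (X i) with hΘg
  have hθG : (aeval Θg G : Polynomial R3) = Polynomial.X ^ n * Polynomial.C G := by
    rw [aeval_X_mul_C _ G n hGh]
    congr 1
    rw [aeval_X_left_apply]
  have hθLL : (aeval Θg LL : Polynomial R3) = Polynomial.X ^ 5 * Polynomial.C LL := by
    rw [aeval_X_mul_C _ LL 5 hLLh]
    congr 1
    rw [aeval_X_left_apply]
  have hθg5 : (aeval Θg g5 : Polynomial R3) ≠ 0 := by
    intro h
    apply hg50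
    have := theta_eval_one g5
    rw [hΘg] at h
    rw [h] at this
    simpa using this.symm
  have hdegeq : n = 5 + (aeval Θg g5 : Polynomial R3).natDegree := by
    have h1 : (aeval Θg G : Polynomial R3).natDegree = n := by
      rw [hθG, mul_comm, Polynomial.natDegree_C_mul_X_pow n G hG0]
    have h2 : (aeval Θg G : Polynomial R3) = (Polynomial.X ^ 5 * Polynomial.C LL)
        * aeval Θg g5 := by
      rw [hGLL, map_mul, hθLL]
    have h3 : (Polynomial.X ^ 5 * Polynomial.C LL : Polynomial R3) ≠ 0 := by
      intro h
      apply hLL0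
      have := congrArg (Polynomial.coeff · 5) h
      simpa using this
    rw [h2, Polynomial.natDegree_mul h3 hθg5] at h1
    rw [← h1, mul_comm, Polynomial.natDegree_C_mul_X_pow 5 LL hLL0]
  omega
lemma not_associated_of_not_smul (l1 l2 : R3) (h1 : l1.IsHomogeneous 1)
    (h2 : l2.IsHomogeneous 1) (hnp : ¬ ∃ c : ℂ, l2 = c • l1) : ¬ Associated l1 l2 := by
  rintro ⟨u, hu⟩
  apply hnp
  refine ⟨coeff 0 (u : R3), ?_⟩
  have key : ∀ k : Fin 3, coeff (Finsupp.single k 1) l2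
      = coeff 0 (u : R3) * coeff (Finsupp.single k 1) l1 := by
    intro k
    rw [← hu, MvPolynomial.coeff_mul]
    rw [Finsupp.antidiagonal_single, Finset.sum_map]
    have hrange : Finset.HasAntidiagonal.antidiagonal 1 = {(0, 1), (1, 0)} := rfl
    rw [hrange]
    have h0 : coeff (0 : Fin 3 →₀ ℕ) l1 = 0 := by
      apply h1.coeff_eq_zero
      simp [degree_eq]
    rw [Finset.sum_insert (by decide), Finset.sum_singleton]
    simp [Function.Embedding.prodMap, h0]
    ring
  rw [linear_as_sum l2 h2, linear_as_sum l1 h1, MvPolynomial.smul_eq_C_mul, Finset.mul_sum]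
  apply Finset.sum_congr rfl
  intro k _
  rw [key k, C_mul]
  ring
/-- All coefficients of a polynomial (in one variable over `R3`) are homogeneous of
complementary degree. -/
def CH (p : Polynomial R3) (d : ℕ) : Prop :=
  ∀ j : ℕ, ((p.coeff j).IsHomogeneous (d - j)) ∧ (d < j → p.coeff j = 0)

lemma CH.mul {p q : Polynomial R3} {dp dq : ℕ} (hp : CH p dp) (hq : CH q dq) :
    CH (p * q) (dp + dq) := by
  intro j
  constructor
  · rw [Polynomial.coeff_mul]
    rw [← mem_homogeneousSubmodule]
    apply Submodule.sum_mem
    intro x hx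
    have hxj : x.1 + x.2 = j := Finset.HasAntidiagonal.mem_antidiagonal.mp hx
    by_cases h1 : dp < x.1
    · rw [(hp x.1).2 h1, zero_mul]
      exact isHomogeneous_zero _ _ _
    by_cases h2 : dq < x.2
    · rw [(hq x.2).2 h2, mul_zero]
      exact isHomogeneous_zero _ _ _
    · rw [mem_homogeneousSubmodule]
      have := ((hp x.1).1).mul ((hq x.2).1)
      have heq : dp - x.1 + (dq - x.2) = dp + dq - j := by omega
      rwa [heq] at this
  · intro hj
    rw [Polynomial.coeff_mul]
    apply Finset.sum_eq_zero
    intro x hx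
    have hxj : x.1 + x.2 = j := Finset.HasAntidiagonal.mem_antidiagonal.mp hx
    by_cases h1 : dp < x.1
    · rw [(hp x.1).2 h1, zero_mul]
    · rw [(hq x.2).2 (by omega), mul_zero]

lemma CH.pow {p : Polynomial R3} {d : ℕ} (hp : CH p d) (n : ℕ) : CH (p ^ n) (n * d) := by
  induction n with
  | zero =>
    intro j
    rcases j with _ | j
    · simp only [pow_zero, Polynomial.coeff_one]
      exact ⟨by simpa using isHomogeneous_one (Fin 3) ℂ, by omega⟩
    · simp only [pow_zero, Polynomial.coeff_one]
      exact ⟨by simpa using isHomogeneous_zero _ _ _, fun _ => by simp⟩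
  | succ n ih =>
    have := ih.mul hp
    have heq : n * d + d = (n + 1) * d := by ring
    rwa [pow_succ, ← heq]

lemma CH_CC {x : R3} {d : ℕ} (hx : x.IsHomogeneous d) : CH (Polynomial.C x) d := by
  intro j
  rcases j with _ | j
  · simpa [Polynomial.coeff_C] using hx
  · simp only [Polynomial.coeff_C]
    exact ⟨by simpa using isHomogeneous_zero _ _ _, fun _ => by simp⟩

lemma CH_L (P : Fin 3 → ℂ) (i : Fin 3) :
    CH (Polynomial.C (X i) + Polynomial.X * Polynomial.C (C (P i) : R3)) 1 := by
  intro j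
  rcases j with _ | _ | j
  · constructor
    · simpa using isHomogeneous_X ℂ i
    · omega
  · constructor
    · simpa using isHomogeneous_C (Fin 3) (P i)
    · omega
  · constructor
    · have : (Polynomial.C (X i) + Polynomial.X
          * Polynomial.C (C (P i) : R3)).coeff (j+2) = 0 := by
        simp [Polynomial.coeff_X_mul, Polynomial.coeff_C]
      rw [this]
      exact isHomogeneous_zero _ _ _
    · intro _
      simp [Polynomial.coeff_X_mul, Polynomial.coeff_C]

lemma CH_sum {s : Finset (Fin 3 →₀ ℕ)} {f : (Fin 3 →₀ ℕ) → Polynomial R3} {d : ℕ}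
    (hf : ∀ m ∈ s, CH (f m) d) : CH (∑ m ∈ s, f m) d := by
  intro j
  constructor
  · rw [Polynomial.finset_sum_coeff, ← mem_homogeneousSubmodule]
    apply Submodule.sum_mem
    intro m hm
    rw [mem_homogeneousSubmodule]
    exact (hf m hm j).1
  · intro hj
    rw [Polynomial.finset_sum_coeff]
    exact Finset.sum_eq_zero fun m hm => (hf m hm j).2 hj

lemma CH_aeval (P : Fin 3 → ℂ) (p : R3) (n : ℕ) (hp : p.IsHomogeneous n) :
    CH (aeval (fun i => Polynomial.C (X i)
      + Polynomial.X * Polynomial.C (C (P i) : R3)) p) n := by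
  conv in aeval _ p => rw [p.as_sum]
  rw [map_sum]
  apply CH_sum
  intro m hm
  have hdeg : m.degree = n := by
    have := hp (mem_support_iff.mp hm)
    simpa [Finsupp.degree_eq_weight_one, Pi.one_def] using this
  rw [aeval_monomial, Finsupp.prod_fintype _ _ (fun i => pow_zero _), Fin.prod_univ_three]
  have halg : (algebraMap ℂ (Polynomial R3)) (coeff m p)
      = Polynomial.C (C (coeff m p) : R3) := by
    rw [Polynomial.algebraMap_apply, algebraMap_eq]
  rw [halg]
  have h0 := CH_CC (isHomogeneous_C (Fin 3) (coeff m p))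
  have h1 := (CH_L P 0).pow (m 0)
  have h2 := (CH_L P 1).pow (m 1)
  have h3 := (CH_L P 2).pow (m 2)
  have := h0.mul ((h1.mul h2).mul h3)
  have heq : 0 + (m 0 * 1 + m 1 * 1 + m 2 * 1) = n := by
    rw [← hdeg, degree_eq]; ring
  rwa [heq] at this
lemma coeff_zero_line (y w : Fin 3 → ℂ) (p : R3) :
    (aeval (fun i => Polynomial.C (y i) + Polynomial.X * Polynomial.C (w i)) p
      : Polynomial ℂ).coeff 0 = eval y p := by
  rw [Polynomial.coeff_zero_eq_eval_zero]
  have h := ringHom_comp_aeval (Polynomial.evalRingHom (0 : ℂ)) (fun c => by simp)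
    (fun i => Polynomial.C (y i) + Polynomial.X * Polynomial.C (w i)) p
  simp only [Polynomial.coe_evalRingHom, Polynomial.eval_add, Polynomial.eval_mul,
    Polynomial.eval_X, Polynomial.eval_C, zero_mul, add_zero] at h
  rw [h, aeval_eq_eval']

lemma eval_line (y w : Fin 3 → ℂ) (p : R3) (t : ℂ) :
    Polynomial.eval t (aeval (fun i => Polynomial.C (y i)
      + Polynomial.X * Polynomial.C (w i)) p : Polynomial ℂ)
      = eval (fun i => y i + t * w i) p := by
  have h := ringHom_comp_aeval (Polynomial.evalRingHom t) (fun c => by simp)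
    (fun i => Polynomial.C (y i) + Polynomial.X * Polynomial.C (w i)) p
  simp only [Polynomial.coe_evalRingHom, Polynomial.eval_add, Polynomial.eval_mul,
    Polynomial.eval_X, Polynomial.eval_C] at h
  rw [h, aeval_eq_eval']

lemma coeff_one_line (y w : Fin 3 → ℂ) (p : R3) :
    (aeval (fun i => Polynomial.C (y i) + Polynomial.X * Polynomial.C (w i)) p
      : Polynomial ℂ).coeff 1 = ∑ i, w i * eval y (pderiv i p) := by
  induction p using MvPolynomial.induction_on with
  | C a => simp
  | add p q hp hq =>
    rw [map_add, Polynomial.coeff_add, hp, hq, ← Finset.sum_add_distrib]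
    apply Finset.sum_congr rfl
    intro i _
    rw [map_add, map_add]
    ring
  | mul_X p j hp =>
    rw [map_mul, aeval_X]
    have hcm : ((aeval (fun i => Polynomial.C (y i) + Polynomial.X * Polynomial.C (w i)) p
        : Polynomial ℂ) * (Polynomial.C (y j) + Polynomial.X * Polynomial.C (w j))).coeff 1
        = (aeval (fun i => Polynomial.C (y i) + Polynomial.X * Polynomial.C (w i)) p
            : Polynomial ℂ).coeff 0 * w j
          + (aeval (fun i => Polynomial.C (y i) + Polynomial.X * Polynomial.C (w i)) p
            : Polynomial ℂ).coeff 1 * y j := by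
      rw [Polynomial.coeff_mul]
      rw [Finset.Nat.sum_antidiagonal_eq_sum_range_succ_mk]
      rw [Finset.sum_range_succ, Finset.sum_range_succ, Finset.sum_range_zero]
      simp [Polynomial.coeff_C]
    rw [hcm, hp, coeff_zero_line]
    have hr : ∀ i : Fin 3, w i * eval y (pderiv i (p * X j))
        = w i * eval y (pderiv i p) * y j + (if i = j then w i * eval y p else 0) := by
      intro i
      rw [pderiv_mul, pderiv_X]
      by_cases hij : i = j
      · subst hij
        simp [Pi.single_apply]
        ring
      · simp [Pi.single_apply, hij]
        ring
    rw [Finset.sum_congr rfl (fun i _ => hr i)]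
    rw [Finset.sum_add_distrib, Finset.sum_ite_eq' Finset.univ j
      (fun i => w i * eval y p)]
    simp only [Finset.mem_univ, if_true, ← Finset.sum_mul]
    ring
lemma isHomogeneous_zero_eq_C {p : R3} (hp : p.IsHomogeneous 0) : p = C (coeff 0 p) := by
  apply MvPolynomial.ext
  intro m
  by_cases hm : m = 0
  · subst hm; simp
  · rw [hp.coeff_eq_zero (by simpa [Finsupp.degree_eq_zero_iff] using hm), coeff_C,
      if_neg (fun h => hm h.symm)]

lemma exists_nonzero_root (u : R3) (hu : u.IsHomogeneous 2) :
    ∃ v : Fin 3 → ℂ, v ≠ 0 ∧ eval v u = 0 := by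
  classical
  set e3 : ℂ := eval ![0, 0, 1] u with he3
  by_cases h3 : e3 = 0
  · refine ⟨![0, 0, 1], ?_, h3⟩
    intro h
    have := congrFun h 2
    simp at this
  · set r : Polynomial ℂ :=
      aeval ![Polynomial.C 1, Polynomial.C 0, Polynomial.X] u with hr
    have hco : r.coeff 2 = e3 := by
      rw [hr, he3]
      conv_lhs => rw [u.as_sum]
      conv_rhs => rw [u.as_sum]
      rw [map_sum, map_sum, Polynomial.finset_sum_coeff]
      apply Finset.sum_congr rfl
      intro m hm
      have hdeg : m.degree = 2 := by
        have := hu (mem_support_iff.mp hm)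
        simpa [Finsupp.degree_eq_weight_one, Pi.one_def] using this
      rw [degree_eq] at hdeg
      rw [aeval_monomial, eval_monomial,
        Finsupp.prod_fintype _ _ (fun i => pow_zero _),
        Finsupp.prod_fintype _ _ (fun i => pow_zero _),
        Fin.prod_univ_three, Fin.prod_univ_three]
      simp only [Matrix.cons_val_zero, Matrix.cons_val_one, Matrix.head_cons,
        Matrix.cons_val_two, Matrix.tail_cons]
      by_cases hm1 : m 1 = 0
      · by_cases hm2 : m 2 = 2
        · have hm0 : m 0 = 0 := by omega
          rw [hm0, hm1, hm2]
          simp [Algebra.algebraMap_self]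
        · -- m 2 ≤ 1, so m 0 ≥ 1 ; coeff 2 of poly of degree m 2 ≤ 1 is 0, and 0 ^ m 0 = 0
          have hm0 : m 0 ≠ 0 := by omega
          rw [hm1]
          simp only [pow_zero, one_mul, mul_one, one_pow]
          rw [zero_pow hm0]
          have : ((algebraMap ℂ (Polynomial ℂ)) (coeff m u) * (Polynomial.C 1 ^ m 0
              * Polynomial.X ^ m 2)).coeff 2 = 0 := by
            simp only [one_pow, Polynomial.C_1, one_mul, Polynomial.algebraMap_eq]
            rw [Polynomial.coeff_C_mul, Polynomial.coeff_X_pow, if_neg (by omega)]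
            simp
          rw [this]
          ring
      · rw [zero_pow hm1]
        have : ((algebraMap ℂ (Polynomial ℂ)) (coeff m u) * (Polynomial.C 1 ^ m 0
            * Polynomial.C 0 ^ m 1 * Polynomial.X ^ m 2)).coeff 2 = 0 := by
          rw [Polynomial.C_0, zero_pow hm1]
          simp
        rw [this]
        simp
    have hr0 : r ≠ 0 := fun h => h3 (by rw [← hco, h]; simp)
    have hdeg2 : 2 ≤ r.natDegree := Polynomial.le_natDegree_of_ne_zero (hco ▸ h3)
    have hdpos : 0 < r.degree := Polynomial.natDegree_pos_iff_degree_pos.mp (by omega)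
    obtain ⟨t0, ht0⟩ := Complex.exists_root hdpos
    refine ⟨![1, 0, t0], ?_, ?_⟩
    · intro h
      have := congrFun h 0
      simp at this
    · have h := ringHom_comp_aeval (Polynomial.evalRingHom t0) (fun c => by simp)
        ![Polynomial.C 1, Polynomial.C 0, Polynomial.X] u
      rw [hr] at ht0
      have ht0' : Polynomial.eval t0
          (aeval ![Polynomial.C 1, Polynomial.C 0, Polynomial.X] u : Polynomial ℂ) = 0 := ht0
      simp only [Polynomial.coe_evalRingHom] at h
      rw [h] at ht0'
      rw [aeval_eq_eval'] at ht0'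
      have hfun : (fun i => Polynomial.eval t0
          (![Polynomial.C 1, Polynomial.C 0, Polynomial.X] i)) = ![1, 0, t0] := by
        funext i
        fin_cases i <;> simp
      rw [hfun] at ht0'
      exact ht0'
lemma map_eval_phihat (P v : Fin 3 → ℂ) (p : R3) :
    Polynomial.map (eval v) (aeval (fun i => Polynomial.C (X i)
        + Polynomial.X * Polynomial.C (C (P i) : R3)) p : Polynomial R3)
      = aeval (fun i => Polynomial.C (v i) + Polynomial.X * Polynomial.C (P i)) p := by
  have h := ringHom_comp_aeval (Polynomial.mapRingHom (MvPolynomial.eval v))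
    (fun c => by simp [Polynomial.algebraMap_apply, algebraMap_eq])
    (fun i => Polynomial.C (X i) + Polynomial.X * Polynomial.C (C (P i) : R3)) p
  simp only [Polynomial.coe_mapRingHom, Polynomial.map_add, Polynomial.map_mul,
    Polynomial.map_C, Polynomial.map_X, eval_X, eval_C] at h
  exact h

lemma phihat_coeff_zero (P : Fin 3 → ℂ) (p : R3) :
    (aeval (fun i => Polynomial.C (X i)
        + Polynomial.X * Polynomial.C (C (P i) : R3)) p : Polynomial R3).coeff 0 = p := by
  rw [Polynomial.coeff_zero_eq_eval_zero]
  have h := ringHom_comp_aeval (Polynomial.evalRingHom (0 : R3))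
    (fun c => by simp [Polynomial.algebraMap_apply, algebraMap_eq])
    (fun i => Polynomial.C (X i) + Polynomial.X * Polynomial.C (C (P i) : R3)) p
  simp only [Polynomial.coe_evalRingHom, Polynomial.eval_add, Polynomial.eval_mul,
    Polynomial.eval_X, Polynomial.eval_C, zero_mul, add_zero] at h
  rw [h]
  exact aeval_X_left_apply p
end AuxBitangent
end AuxBitangent

/-- `f` is smooth: no nonzero complex point at which all partial derivatives of the
complexification of `f` vanish. -/
def IsSmooth (f : MvPolynomial (Fin 3) ℝ) : Prop :=
  ∀ a : Fin 3 → ℂ,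
    (∀ i, eval a (pderiv i (map (algebraMap ℝ ℂ) f)) = 0) → a = 0

/-- A bitangent of `f`: a nonzero complex linear form `l` such that
`f = q² + h·l` for some forms `q` of degree 2 and `h` of degree 3. -/
def IsBitangent (f : MvPolynomial (Fin 3) ℝ) (l : MvPolynomial (Fin 3) ℂ) : Prop :=
  l ≠ 0 ∧ l.IsHomogeneous 1 ∧ ∃ q h : MvPolynomial (Fin 3) ℂ,
    q.IsHomogeneous 2 ∧ h.IsHomogeneous 3 ∧
    map (algebraMap ℝ ℂ) f = q ^ 2 + h * l

open AuxBitangent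

/-- At most four bitangents of a smooth ternary quartic can intersect in a common
point: there is no nonzero point of `ℂ³` at which five pairwise non-proportional
bitangents all vanish. -/
theorem at_most_four_concurrent_bitangents
    (f : MvPolynomial (Fin 3) ℝ) (hhom : f.IsHomogeneous 4) (hsm : IsSmooth f) :
    ¬ ∃ l : Fin 5 → MvPolynomial (Fin 3) ℂ,
        (∀ i, IsBitangent f (l i)) ∧
        (∀ i j, i ≠ j → ¬ ∃ c : ℂ, l i = c • l j) ∧
        ∃ P : Fin 3 → ℂ, P ≠ 0 ∧ ∀ i, eval P (l i) = 0 := by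
  rintro ⟨l, hbit, hnp, P, hP, hvan⟩
  set F : MvPolynomial (Fin 3) ℂ := map (algebraMap ℝ ℂ) f with hFdef
  have hF : F.IsHomogeneous 4 := hhom.map _
  have hl0 : ∀ i, l i ≠ 0 := fun i => (hbit i).1
  have hlh : ∀ i, (l i).IsHomogeneous 1 := fun i => (hbit i).2.1
  have hnassoc : ∀ i j, i ≠ j → ¬ Associated (l i) (l j) := by
    intro i j hij
    apply not_associated_of_not_smul _ _ (hlh i) (hlh j)
    rintro ⟨c, hc⟩
    exact hnp j i (Ne.symm hij) ⟨c, hc⟩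
  set a : ℂ := eval P F with ha
  by_cases ha0 : a = 0
  · -- P is a singular point of F
    set G : MvPolynomial (Fin 3) ℂ := ∑ i, C (eval P (pderiv i F)) * X i with hG
    have hGh : G.IsHomogeneous 1 := by
      rw [hG]
      exact IsHomogeneous.sum _ _ _ (fun i _ => isHomogeneous_C_mul_X _ _)
    have hvG : ∀ i (v : Fin 3 → ℂ), eval v (l i) = 0 → eval v G = 0 := by
      intro i v hv
      obtain ⟨q, h, hq2, hh3, hdecomp⟩ := (hbit i).2.2
      have hlzero : (aeval (fun k => Polynomial.C (P k) + Polynomial.X * Polynomial.C (v k))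
          (l i) : Polynomial ℂ) = 0 := by
        apply Polynomial.funext
        intro t
        rw [eval_line]
        rw [eval_linear (l i) (hlh i) P v t, hvan i, hv]
        simp
      have hgF : (aeval (fun k => Polynomial.C (P k) + Polynomial.X * Polynomial.C (v k)) F
          : Polynomial ℂ)
          = (aeval (fun k => Polynomial.C (P k) + Polynomial.X * Polynomial.C (v k)) q) ^ 2 := by
        rw [hFdef, hdecomp, map_add, map_pow, map_mul, hlzero, mul_zero, add_zero]
      have hc00 : (aeval (fun k => Polynomial.C (P k) + Polynomial.X * Polynomial.C (v k)) q
          : Polynomial ℂ).coeff 0 = 0 := by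
        have h0 : ((aeval (fun k => Polynomial.C (P k) + Polynomial.X * Polynomial.C (v k)) q
            : Polynomial ℂ) ^ 2).coeff 0 = a := by
          rw [← hgF, coeff_zero_line, ha, hFdef]
        rw [sq, Polynomial.mul_coeff_zero, ha0] at h0
        exact mul_self_eq_zero.mp h0
      have hc1 : (aeval (fun k => Polynomial.C (P k) + Polynomial.X * Polynomial.C (v k)) F
          : Polynomial ℂ).coeff 1 = 0 := by
        rw [hgF, sq, Polynomial.coeff_mul, Finset.Nat.sum_antidiagonal_eq_sum_range_succ_mk,
          Finset.sum_range_succ, Finset.sum_range_succ, Finset.sum_range_zero, hc00]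
        ring
      rw [coeff_one_line] at hc1
      rw [hG]
      rw [map_sum]
      simp only [eval_mul, eval_C, eval_X]
      rw [← hc1]
      apply Finset.sum_congr rfl
      intro k _
      ring
    have hG0 : G = 0 :=
      eq_zero_of_vanish_five l hlh hl0 hnassoc G 1 hGh (by omega)
        (fun i => linear_dvd_of_vanishing _ _ (hlh i) (hl0 i) (hvG i))
    have hgrad : ∀ j, eval P (pderiv j F) = 0 := by
      intro j
      have hyp := congrArg (eval (Pi.single j (1:ℂ))) hG0
      rw [hG, map_sum, map_zero] at hyp
      simp only [eval_mul, eval_C, eval_X, Pi.single_apply] at hyp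
      rw [Finset.sum_congr rfl (fun k (_ : k ∈ Finset.univ) => by
        rw [mul_ite, mul_one, mul_zero] : ∀ k ∈ Finset.univ,
          eval P (pderiv k F) * (if k = j then (1:ℂ) else 0)
            = if k = j then eval P (pderiv k F) else 0)] at hyp
      rw [Finset.sum_ite_eq' Finset.univ j (fun k => eval P (pderiv k F))] at hyp
      simpa using hyp
    exact hP (hsm P hgrad)
  · -- the case a ≠ 0
    have hch := CH_aeval P F 4 hF
    set A : ℕ → MvPolynomial (Fin 3) ℂ := fun k => (aeval (fun i => Polynomial.C (X i)
      + Polynomial.X * Polynomial.C (C (P i) : MvPolynomial (Fin 3) ℂ)) F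
        : Polynomial (MvPolynomial (Fin 3) ℂ)).coeff k with hAdef
    have hA2h : (A 2).IsHomogeneous 2 := (hch 2).1
    have hA3h : (A 3).IsHomogeneous 1 := (hch 3).1
    have hA0 : A 0 = F := phihat_coeff_zero P F
    have hA4C : A 4 = C a := by
      have h0 : A 4 = C (coeff 0 (A 4)) := isHomogeneous_zero_eq_C ((hch 4).1)
      have hval : coeff 0 (A 4) = a := by
        have h1 : coeff 0 (A 4) = eval (0 : Fin 3 → ℂ) (A 4) := by
          rw [eval_zero, constantCoeff_eq]
        have h2 : eval (0 : Fin 3 → ℂ) (A 4)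
            = (Polynomial.map (eval (0 : Fin 3 → ℂ)) (aeval (fun i => Polynomial.C (X i)
              + Polynomial.X * Polynomial.C (C (P i) : MvPolynomial (Fin 3) ℂ)) F
                : Polynomial (MvPolynomial (Fin 3) ℂ))).coeff 4 := by
          rw [Polynomial.coeff_map, hAdef]
        have h3 := map_eval_phihat P (0 : Fin 3 → ℂ) F
        have h4 : (fun i => Polynomial.C ((0 : Fin 3 → ℂ) i) + Polynomial.X
            * Polynomial.C (P i)) = fun i => (Polynomial.X : Polynomial ℂ)
              * Polynomial.C (P i) := by
          funext i
          simp
        rw [h1, h2, h3, h4, aeval_X_mul_C P F 4 hF, mul_comm, Polynomial.coeff_C_mul,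
          Polynomial.coeff_X_pow, if_pos rfl, mul_one, aeval_eq_eval', ha]
      rw [hval] at h0
      exact h0
    set u : MvPolynomial (Fin 3) ℂ := C (4 * a) * A 2 - (A 3) ^ 2 with hu
    have huh : u.IsHomogeneous 2 := by
      rw [hu]
      exact ((isHomogeneous_C (Fin 3) (4 * a)).mul hA2h).sub (hA3h.pow 2)
    set G2 : MvPolynomial (Fin 3) ℂ := C (64 * a ^ 3) * A 0 - u ^ 2 with hG2
    have hG2h : G2.IsHomogeneous 4 := by
      rw [hG2, hA0]
      exact ((isHomogeneous_C (Fin 3) (64 * a ^ 3)).mul hF).sub (huh.pow 2)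
    have hvG2 : ∀ i (v : Fin 3 → ℂ), eval v (l i) = 0 → eval v G2 = 0 := by
      intro i v hv
      obtain ⟨q, h, hq2, hh3, hdecomp⟩ := (hbit i).2.2
      set Q : Polynomial ℂ := Polynomial.map (eval v) (aeval (fun k => Polynomial.C (X k)
        + Polynomial.X * Polynomial.C (C (P k) : MvPolynomial (Fin 3) ℂ)) q) with hQ
      have hΛ : Polynomial.map (eval v) (aeval (fun k => Polynomial.C (X k)
          + Polynomial.X * Polynomial.C (C (P k) : MvPolynomial (Fin 3) ℂ)) (l i)
            : Polynomial (MvPolynomial (Fin 3) ℂ)) = 0 := by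
        rw [map_eval_phihat]
        apply Polynomial.funext
        intro t
        rw [eval_line]
        rw [eval_linear (l i) (hlh i) v P t, hv, hvan i]
        simp
      have hmap : Polynomial.map (eval v) (aeval (fun k => Polynomial.C (X k)
          + Polynomial.X * Polynomial.C (C (P k) : MvPolynomial (Fin 3) ℂ)) F
            : Polynomial (MvPolynomial (Fin 3) ℂ)) = Q * Q := by
        rw [hFdef, hdecomp, map_add, map_pow, map_mul, Polynomial.map_add,
          Polynomial.map_pow, Polynomial.map_mul, hΛ, mul_zero, add_zero, sq, hQ]
      have hQc : ∀ k : ℕ, 2 < k → Q.coeff k = 0 := by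
        intro k hk
        rw [hQ, Polynomial.coeff_map, (CH_aeval P q 2 hq2 k).2 hk, map_zero]
      have hQ3 : Q.coeff 3 = 0 := hQc 3 (by omega)
      have hQ4 : Q.coeff 4 = 0 := hQc 4 (by omega)
      have he : ∀ k, eval v (A k) = (Q * Q).coeff k := by
        intro k
        rw [hAdef, ← Polynomial.coeff_map, hmap]
      have e0 : eval v (A 0) = Q.coeff 0 * Q.coeff 0 := by
        rw [he 0, Polynomial.mul_coeff_zero]
      have e2 : eval v (A 2) = Q.coeff 0 * Q.coeff 2 + Q.coeff 1 * Q.coeff 1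
          + Q.coeff 2 * Q.coeff 0 := by
        rw [he 2, Polynomial.coeff_mul, Finset.Nat.sum_antidiagonal_eq_sum_range_succ_mk,
          Finset.sum_range_succ, Finset.sum_range_succ, Finset.sum_range_succ,
          Finset.sum_range_zero]
        ring
      have e3 : eval v (A 3) = Q.coeff 1 * Q.coeff 2 + Q.coeff 2 * Q.coeff 1 := by
        rw [he 3, Polynomial.coeff_mul, Finset.Nat.sum_antidiagonal_eq_sum_range_succ_mk,
          Finset.sum_range_succ, Finset.sum_range_succ, Finset.sum_range_succ,
          Finset.sum_range_succ, Finset.sum_range_zero, hQ3]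
        ring
      have e4 : a = Q.coeff 2 * Q.coeff 2 := by
        have h44 : eval v (A 4) = Q.coeff 2 * Q.coeff 2 := by
          rw [he 4, Polynomial.coeff_mul, Finset.Nat.sum_antidiagonal_eq_sum_range_succ_mk,
            Finset.sum_range_succ, Finset.sum_range_succ, Finset.sum_range_succ,
            Finset.sum_range_succ, Finset.sum_range_succ, Finset.sum_range_zero, hQ3, hQ4]
          ring
        rw [hA4C] at h44
        simpa using h44
      have hgoal : eval v G2 = 64 * a ^ 3 * eval v (A 0)
          - (4 * a * eval v (A 2) - (eval v (A 3)) ^ 2) ^ 2 := by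
        rw [hG2, hu]
        simp only [map_sub, eval_mul, eval_pow, eval_C]
      rw [hgoal, e0, e2, e3, e4]
      ring
    have hG20 : G2 = 0 :=
      eq_zero_of_vanish_five l hlh hl0 hnassoc G2 4 hG2h (by omega)
        (fun i => linear_dvd_of_vanishing _ _ (hlh i) (hl0 i) (hvG2 i))
    have hFsq : C (64 * a ^ 3) * F = u ^ 2 := by
      have := sub_eq_zero.mp (hG2 ▸ hG20)
      rwa [hA0] at this
    obtain ⟨v0, hv0ne, hv0⟩ := exists_nonzero_root u huh
    have hane : (64 : ℂ) * a ^ 3 ≠ 0 := mul_ne_zero (by norm_num) (pow_ne_zero _ ha0)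
    have hgrad : ∀ j, eval v0 (pderiv j F) = 0 := by
      intro j
      have hd := congrArg (pderiv j) hFsq
      rw [pderiv_C_mul, sq, pderiv_mul] at hd
      have hev := congrArg (eval v0) hd
      rw [eval_mul, eval_C, map_add, eval_mul, eval_mul, hv0, mul_zero, zero_mul,
        add_zero] at hev
      exact (mul_eq_zero.mp hev).resolve_left hane
    exact hv0ne (hsm v0 hgrad)
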